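/- There exists an absolute constant C > 0 such that for every u ∈ [0, 1): | (1−u²)/(2π) · ∫_0^{2π} (2 log|1 − u e^{iθ}|)² / |1 − u e^{iθ}|² dθ − 2u² | ≤ C u⁴ / (1 − u²)². -/

import Mathlib

open MeasureTheory Real Complex Metric intervalIntegral
set_option maxHeartbeats 1000000

lemma wcont (u : ℝ) : Continuous fun θ:ℝ => 1 - (u:ℂ)*Complex.exp (θ*Complex.I) := by
  fun_prop

lemma wlb (u : ℝ) (hu0 : 0 ≤ u) (θ : ℝ) : 1 - u ≤ ‖1 - (u:ℂ)*Complex.exp (θ*Complex.I)‖ := by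
  have h1 : ‖(u:ℂ)*Complex.exp (θ*Complex.I)‖ = |u| := by
    rw [norm_mul, Complex.norm_real, Real.norm_eq_abs,
      Complex.norm_exp_ofReal_mul_I, mul_one]
  have := norm_sub_norm_le (1:ℂ) ((u:ℂ)*Complex.exp (θ*Complex.I))
  rw [h1, norm_one] at this
  calc 1 - u ≤ 1 - |u| := by rw [_root_.abs_of_nonneg hu0]
  _ ≤ _ := this

lemma wub (u : ℝ) (hu0 : 0 ≤ u) (θ : ℝ) : ‖1 - (u:ℂ)*Complex.exp (θ*Complex.I)‖ ≤ 1 + u := by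
  have h1 : ‖(u:ℂ)*Complex.exp (θ*Complex.I)‖ = |u| := by
    rw [norm_mul, Complex.norm_real, Real.norm_eq_abs,
      Complex.norm_exp_ofReal_mul_I, mul_one]
  calc ‖1 - (u:ℂ)*Complex.exp (θ*Complex.I)‖ ≤ ‖(1:ℂ)‖ + ‖(u:ℂ)*Complex.exp (θ*Complex.I)‖ :=
        norm_sub_le _ _
  _ = 1 + u := by rw [h1, norm_one, _root_.abs_of_nonneg hu0]

lemma wpos (u : ℝ) (hu0 : 0 ≤ u) (hu1 : u < 1) (θ : ℝ) : 0 < ‖1 - (u:ℂ)*Complex.exp (θ*Complex.I)‖ :=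
  lt_of_lt_of_le (by linarith) (wlb u hu0 θ)


theorem Jlem (u : ℝ) (hu0 : 0 ≤ u) (hu1 : u < 1) (n : ℕ) :
    (∫ θ in (0:ℝ)..(2*π), Complex.exp (n*θ*Complex.I) / (‖1 - (u:ℂ)*Complex.exp (θ*Complex.I)‖:ℂ)^2)
      = 2*π*u^n/(1-u^2) := by
  have hnorm1 : ∀ θ:ℝ, ‖Complex.exp (θ*Complex.I)‖ = 1 := by
    intro θ; rw [Complex.norm_exp_ofReal_mul_I]
  have hne : ∀ z : ℂ, ‖z‖ ≤ 1 → 1 - (u:ℂ)*z ≠ 0 := by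
    intro z hz h
    have h1 : (u:ℂ)*z = 1 := by linear_combination -h
    have h2 : ‖(u:ℂ)*z‖ = 1 := by rw [h1]; simp
    rw [norm_mul, Complex.norm_real, Real.norm_eq_abs, _root_.abs_of_nonneg hu0] at h2
    nlinarith [norm_nonneg z]
  have hf : DiffContOnCl ℂ (fun z => z^n/(1-(u:ℂ)*z)) (ball 0 1) := by
    apply DifferentiableOn.diffContOnCl
    apply DifferentiableOn.div
    · exact (differentiable_pow n).differentiableOn
    · exact (differentiable_const _ |>.sub ((differentiable_id).const_mul _)).differentiableOn
    · intro z hz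
      exact hne z (by simpa [Metric.mem_closedBall, Complex.dist_eq] using
        (Metric.mem_closedBall.mp (closure_ball_subset_closedBall hz)))
  have hu' : (u:ℂ) ∈ ball (0:ℂ) 1 := by
    simp [Metric.mem_ball, Complex.dist_eq, _root_.abs_of_nonneg hu0]
    exact hu1
  have key := hf.circleIntegral_sub_inv_smul hu'
  rw [circleIntegral] at key
  have hpt : ∀ θ : ℝ, deriv (circleMap 0 1) θ •
      ((circleMap 0 1 θ - (u:ℂ))⁻¹ • ((circleMap 0 1 θ)^n/(1-(u:ℂ)*circleMap 0 1 θ)))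
      = Complex.I * (Complex.exp (n*θ*Complex.I) / (‖1 - (u:ℂ)*Complex.exp (θ*Complex.I)‖:ℂ)^2) := by
    intro θ
    set z := Complex.exp (θ*Complex.I) with hzdef
    have hz : z ≠ 0 := Complex.exp_ne_zero _
    have hw : 1 - (u:ℂ)*z ≠ 0 := hne _ (le_of_eq (hnorm1 θ))
    have hzu : circleMap 0 1 θ - (u:ℂ) ≠ 0 := by
      rw [circleMap_zero]
      intro h
      have h1 : z = (u:ℂ) := by push_cast at h ⊢; linear_combination h
      have := hnorm1 θ
      rw [← hzdef, h1, Complex.norm_real, Real.norm_eq_abs, _root_.abs_of_nonneg hu0] at this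
      exact absurd this (by linarith)
    -- norm squared identity
    have hcz : (starRingEnd ℂ) z = z⁻¹ := by
      rw [hzdef, ← Complex.exp_conj]
      simp only [map_mul, Complex.conj_ofReal, Complex.conj_I]
      rw [← Complex.exp_neg]
      ring_nf
    have hns : ((‖1 - (u:ℂ)*z‖:ℝ):ℂ)^2 = (1-(u:ℂ)*z) * (1 - (u:ℂ)*z⁻¹) := by
      have := Complex.mul_conj (1 - (u:ℂ)*z)
      rw [map_sub, map_one, map_mul, Complex.conj_ofReal, hcz] at this
      rw [this]
      norm_cast
      rw [Complex.sq_norm]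
    -- main pointwise computation
    rw [deriv_circleMap, circleMap_zero, hns]
    have hzn : z^n = Complex.exp (n*θ*Complex.I) := by
      rw [hzdef, ← Complex.exp_nat_mul]; ring_nf
    have hwi : 1 - (u:ℂ)*z⁻¹ ≠ 0 := by
      intro h
      have : z - (u:ℂ) = z * (1 - (u:ℂ)*z⁻¹) := by field_simp
      rw [h, mul_zero] at this
      apply hzu
      rw [circleMap_zero]; push_cast; linear_combination this
    have hzu' : z - (u:ℂ) ≠ 0 := by
      intro h; apply hzu; rw [circleMap_zero]; push_cast; linear_combination h
    rw [smul_eq_mul, smul_eq_mul]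
    simp only [Complex.ofReal_one, one_mul, ← hzdef, hzn]
    field_simp
  simp only [hpt] at key
  rw [intervalIntegral.integral_const_mul, smul_eq_mul] at key
  apply mul_left_cancel₀ Complex.I_ne_zero
  rw [key]; push_cast; ring

theorem Jcos (u : ℝ) (hu0 : 0 ≤ u) (hu1 : u < 1) (n : ℕ) :
    (∫ θ in (0:ℝ)..(2*π), Real.cos (n*θ) / ‖1 - (u:ℂ)*Complex.exp (θ*Complex.I)‖^2)
      = 2*π*u^n/(1-u^2) := by
  have key := Jlem u hu0 hu1 n
  have hint : IntervalIntegrable (fun θ:ℝ => Complex.exp (n*θ*Complex.I)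
      / (‖1 - (u:ℂ)*Complex.exp (θ*Complex.I)‖:ℂ)^2) volume 0 (2*π) := by
    apply Continuous.intervalIntegrable
    apply Continuous.div
    · fun_prop
    · exact (Complex.continuous_ofReal.comp (wcont u).norm).pow 2
    · intro θ
      exact pow_ne_zero _ (Complex.ofReal_ne_zero.mpr (wpos u hu0 hu1 θ).ne')
  have hre : ∀ θ:ℝ, (Complex.exp (n*θ*Complex.I)
      / (‖1 - (u:ℂ)*Complex.exp (θ*Complex.I)‖:ℂ)^2).re
      = Real.cos (n*θ) / ‖1 - (u:ℂ)*Complex.exp (θ*Complex.I)‖^2 := by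
    intro θ
    rw [show ((‖1 - (u:ℂ)*Complex.exp (θ*Complex.I)‖:ℝ):ℂ)^2
        = ((‖1 - (u:ℂ)*Complex.exp (θ*Complex.I)‖^2:ℝ):ℂ) by push_cast; ring]
    rw [Complex.div_ofReal_re]
    congr 1
    rw [show ((n:ℂ)*(θ:ℂ)*Complex.I) = (((n*θ:ℝ)):ℂ)*Complex.I by push_cast; ring]
    exact Complex.exp_ofReal_mul_I_re _
  apply_fun Complex.re at key
  rw [show (2*(π:ℂ)*(u:ℂ)^n/(1-(u:ℂ)^2)) = ((2*π*u^n/(1-u^2):ℝ):ℂ) by push_cast; ring,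
    Complex.ofReal_re] at key
  rw [← key]
  rw [intervalIntegral_eq_integral_uIoc, intervalIntegral_eq_integral_uIoc,
    if_pos (by positivity : (0:ℝ) ≤ 2*π), one_smul, one_smul]
  have : Complex.re = RCLike.re := rfl
  rw [this, ← integral_re (intervalIntegrable_iff.mp hint)]
  apply MeasureTheory.integral_congr_ae
  filter_upwards with θ
  exact (hre θ).symm


lemma normsq_eq (u θ : ℝ) :
    ‖1 - (u:ℂ)*Complex.exp (θ*Complex.I)‖^2 = 1 - 2*u*Real.cos θ + u^2 := by
  rw [Complex.sq_norm, Complex.normSq_apply]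
  rw [Complex.exp_mul_I]
  simp [Complex.cos_ofReal_re, Complex.sin_ofReal_re, Complex.add_im, Complex.sub_re]
  ring_nf
  nlinarith [Real.sin_sq_add_cos_sq θ]

lemma two_log_eq (u θ : ℝ) :
    2 * Real.log ‖1 - (u:ℂ)*Complex.exp (θ*Complex.I)‖
      = Real.log (1 - (2*u*Real.cos θ - u^2)) := by
  have h := normsq_eq u θ
  have h2 : Real.log (‖1 - (u:ℂ)*Complex.exp (θ*Complex.I)‖^2)
      = 2 * Real.log ‖1 - (u:ℂ)*Complex.exp (θ*Complex.I)‖ := by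
    rw [Real.log_pow]; push_cast; ring
  rw [← h2, h]; ring_nf

lemma pointwise_est (u θ : ℝ) (hu0 : 0 ≤ u) (hu : u ≤ 1/3) :
    |(2 * Real.log ‖1 - (u:ℂ)*Complex.exp (θ*Complex.I)‖)^2
      - (4*u^2*(Real.cos θ)^2 - 4*u^3*Real.cos θ + 8*u^3*(Real.cos θ)^3)| ≤ 1000*u^4 := by
  set c := Real.cos θ with hcdef
  have hc : |c| ≤ 1 := Real.abs_cos_le_one θ
  obtain ⟨hcl, hcu⟩ := abs_le.mp hc
  set t := 2*u*c - u^2 with htdef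
  have ht1 : |t| ≤ 7/3*u := by
    rw [htdef, abs_le]; constructor <;> nlinarith
  obtain ⟨htl, htu⟩ := abs_le.mp ht1
  have ht9 : |t| ≤ 7/9 := by linarith
  have ht2 : |t| < 1 := by linarith
  have hlog := Real.abs_log_sub_add_sum_range_le ht2 2
  simp [Finset.sum_range_succ] at hlog
  set r := Real.log (1-t) + (t + t^2/2) with hrdef
  have hr0 : |r| ≤ |t|^3/(1-|t|) := by
    rw [show r = t + t^2/(1+1) + Real.log (1-t) from by rw [hrdef]; ring]
    exact hlog
  have ht3 : |t|^3 ≤ 343/27*u^3 := by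
    have := pow_le_pow_left₀ (abs_nonneg t) ht1 3
    nlinarith
  have hr : |r| ≤ 58*u^3 := by
    have hden : (0:ℝ) < 1 - |t| := by linarith
    calc |r| ≤ |t|^3/(1-|t|) := hr0
    _ ≤ 58*u^3 := by
        rw [div_le_iff₀ hden]
        nlinarith [pow_nonneg hu0 3, mul_le_mul_of_nonneg_left ht9 (pow_nonneg hu0 3)]
  obtain ⟨hrl, hru⟩ := abs_le.mp hr
  have hL : 2 * Real.log ‖1 - (u:ℂ)*Complex.exp (θ*Complex.I)‖ = -(t + t^2/2) + r := by
    rw [two_log_eq u θ, ← hcdef, ← htdef, hrdef]; ring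
  rw [hL]
  have expand : (-(t + t^2/2) + r)^2 - (4*u^2*c^2 - 4*u^3*c + 8*u^3*c^3)
      = u^4 - 12*u^4*c^2 + 6*u^5*c - u^6 + t^4/4 - 2*(r*(t+t^2/2)) + r^2 := by
    rw [htdef]; ring
  rw [expand]
  clear_value c t r
  clear hlog hr0 hL expand hcdef htdef hrdef
  -- prepared linear facts
  have h4 : (0:ℝ) ≤ u^4 := by positivity
  have hu2 : u^2 ≤ 1/9 := by nlinarith [mul_le_mul hu hu hu0 (by norm_num : (0:ℝ) ≤ 1/3)]
  have h6a : (0:ℝ) ≤ u^6 := by positivity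
  have h6 : u^6 ≤ u^4/9 := by nlinarith [mul_le_mul_of_nonneg_left hu2 h4]
  have h5 : u^5 ≤ u^4/3 := by nlinarith [mul_le_mul_of_nonneg_left hu h4]
  have h5a : (0:ℝ) ≤ u^5 := by positivity
  have h5c1 : u^5*c ≤ u^4/3 := by nlinarith [mul_le_mul_of_nonneg_left hcu h5a]
  have h5c2 : -(u^4/3) ≤ u^5*c := by nlinarith [mul_le_mul_of_nonneg_left hcl h5a]
  have hc2a : (0:ℝ) ≤ u^4*c^2 := by positivity
  have hcsq : c^2 ≤ 1 := by nlinarith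
  have hc2b : u^4*c^2 ≤ u^4 := by nlinarith [mul_le_mul_of_nonneg_left hcsq h4]
  have ht4 : t^4 ≤ 2401/81*u^4 := by
    have h1 : |t|^4 ≤ (7/3*u)^4 := pow_le_pow_left₀ (abs_nonneg t) ht1 4
    have h2 : |t|^4 = t^4 := by rw [← _root_.abs_pow]; exact _root_.abs_of_nonneg (by positivity)
    nlinarith
  have ht40 : (0:ℝ) ≤ t^4 := by positivity
  have htt : |t + t^2/2| ≤ 4*u := by
    calc |t + t^2/2| ≤ |t| + |t^2/2| := abs_add_le _ _
    _ = |t| + t^2/2 := by rw [_root_.abs_of_nonneg (by positivity : (0:ℝ) ≤ t^2/2)]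
    _ ≤ 4*u := by nlinarith [_root_.sq_abs t, abs_nonneg t]
  have hX : |r*(t+t^2/2)| ≤ 232*u^4 := by
    rw [abs_mul]
    calc |r| * |t + t^2/2| ≤ (58*u^3)*(4*u) :=
          mul_le_mul hr htt (abs_nonneg _) (by positivity)
    _ = 232*u^4 := by ring
  obtain ⟨hXl, hXu⟩ := abs_le.mp hX
  have hr2 : r^2 ≤ 3364*u^6 := by
    have h1 : |r|^2 ≤ (58*u^3)^2 := pow_le_pow_left₀ (abs_nonneg r) hr 2
    have h2 : |r|^2 = r^2 := _root_.sq_abs r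
    nlinarith
  have hr20 : (0:ℝ) ≤ r^2 := sq_nonneg r
  rw [abs_le]
  constructor <;> linarith

lemma fine_branch (u : ℝ) (hu0 : 0 ≤ u) (hu : u ≤ 1/3) :
    |((1 - u ^ 2) / (2 * π)) * (∫ θ in (0:ℝ)..(2 * π),
          (2 * Real.log ‖1 - (u : ℂ) * Complex.exp (θ * Complex.I)‖) ^ 2
            / ‖1 - (u : ℂ) * Complex.exp (θ * Complex.I)‖ ^ 2) - 2 * u ^ 2|
      ≤ 1006 * u ^ 4 := by
  have hu1 : u < 1 := by linarith
  have hπ : (0:ℝ) < π := Real.pi_pos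
  have hwc : Continuous fun θ:ℝ => ‖1 - (u:ℂ)*Complex.exp (θ*Complex.I)‖ := (wcont u).norm
  have hwne : ∀ θ:ℝ, ‖1 - (u:ℂ)*Complex.exp (θ*Complex.I)‖ ≠ 0 := fun θ => (wpos u hu0 hu1 θ).ne'
  have hdc : Continuous fun θ:ℝ => ‖1 - (u:ℂ)*Complex.exp (θ*Complex.I)‖^2 := hwc.pow 2
  have hdne : ∀ θ:ℝ, ‖1 - (u:ℂ)*Complex.exp (θ*Complex.I)‖^2 ≠ 0 :=
    fun θ => pow_ne_zero 2 (hwne θ)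
  have hdpos : ∀ θ:ℝ, 0 < ‖1 - (u:ℂ)*Complex.exp (θ*Complex.I)‖^2 :=
    fun θ => pow_pos (wpos u hu0 hu1 θ) 2
  have hgc : Continuous fun θ:ℝ =>
      (2 * Real.log ‖1 - (u:ℂ)*Complex.exp (θ*Complex.I)‖)^2
        / ‖1 - (u:ℂ)*Complex.exp (θ*Complex.I)‖^2 :=
    ((continuous_const.mul (hwc.log hwne)).pow 2).div hdc hdne
  have hmc : Continuous fun θ:ℝ =>
      (4*u^2*(Real.cos θ)^2 - 4*u^3*Real.cos θ + 8*u^3*(Real.cos θ)^3)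
        / ‖1 - (u:ℂ)*Complex.exp (θ*Complex.I)‖^2 := by
    apply Continuous.div _ hdc hdne
    fun_prop
  have hgint := hgc.intervalIntegrable (μ := volume) (0:ℝ) (2*π)
  have hmint := hmc.intervalIntegrable (μ := volume) (0:ℝ) (2*π)
  -- J values
  have hJ0 : (∫ θ in (0:ℝ)..(2*π), 1/‖1 - (u:ℂ)*Complex.exp (θ*Complex.I)‖^2)
      = 2*π/(1-u^2) := by simpa using Jcos u hu0 hu1 0
  have hJ1 : (∫ θ in (0:ℝ)..(2*π), Real.cos θ/‖1 - (u:ℂ)*Complex.exp (θ*Complex.I)‖^2)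
      = 2*π*u/(1-u^2) := by simpa using Jcos u hu0 hu1 1
  have hJ2 : (∫ θ in (0:ℝ)..(2*π), Real.cos (2*θ)/‖1 - (u:ℂ)*Complex.exp (θ*Complex.I)‖^2)
      = 2*π*u^2/(1-u^2) := by
    have := Jcos u hu0 hu1 2; push_cast at this; exact this
  have hJ3 : (∫ θ in (0:ℝ)..(2*π), Real.cos (3*θ)/‖1 - (u:ℂ)*Complex.exp (θ*Complex.I)‖^2)
      = 2*π*u^3/(1-u^2) := by
    have := Jcos u hu0 hu1 3; push_cast at this; exact this
  -- integral of the main comparison function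
  have hIm : (∫ θ in (0:ℝ)..(2*π),
      (4*u^2*(Real.cos θ)^2 - 4*u^3*Real.cos θ + 8*u^3*(Real.cos θ)^3)
        / ‖1 - (u:ℂ)*Complex.exp (θ*Complex.I)‖^2)
      = 2*π*(2*u^2 + 4*u^4 + 2*u^6)/(1-u^2) := by
    have h1 : ∀ θ:ℝ, (4*u^2*(Real.cos θ)^2 - 4*u^3*Real.cos θ + 8*u^3*(Real.cos θ)^3)
        / ‖1 - (u:ℂ)*Complex.exp (θ*Complex.I)‖^2
        = 2*u^2*(1/‖1 - (u:ℂ)*Complex.exp (θ*Complex.I)‖^2)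
          + (2*u^3*(Real.cos θ/‖1 - (u:ℂ)*Complex.exp (θ*Complex.I)‖^2)
          + (2*u^2*(Real.cos (2*θ)/‖1 - (u:ℂ)*Complex.exp (θ*Complex.I)‖^2)
          + 2*u^3*(Real.cos (3*θ)/‖1 - (u:ℂ)*Complex.exp (θ*Complex.I)‖^2))) := by
      intro θ
      rw [Real.cos_two_mul, Real.cos_three_mul]
      field_simp
      ring
    rw [integral_congr (fun θ _ => h1 θ)]
    have hc0 : Continuous fun θ:ℝ => 1/‖1 - (u:ℂ)*Complex.exp (θ*Complex.I)‖^2 :=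
      continuous_const.div hdc hdne
    have hc1 : Continuous fun θ:ℝ => Real.cos θ/‖1 - (u:ℂ)*Complex.exp (θ*Complex.I)‖^2 :=
      Real.continuous_cos.div hdc hdne
    have hc2 : Continuous fun θ:ℝ => Real.cos (2*θ)/‖1 - (u:ℂ)*Complex.exp (θ*Complex.I)‖^2 :=
      (Real.continuous_cos.comp (continuous_const.mul continuous_id)).div hdc hdne
    have hc3 : Continuous fun θ:ℝ => Real.cos (3*θ)/‖1 - (u:ℂ)*Complex.exp (θ*Complex.I)‖^2 :=
      (Real.continuous_cos.comp (continuous_const.mul continuous_id)).div hdc hdne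
    rw [integral_add ((continuous_const.fun_mul hc0).intervalIntegrable _ _)
        (((continuous_const.fun_mul hc1).fun_add ((continuous_const.fun_mul hc2).fun_add
          (continuous_const.fun_mul hc3))).intervalIntegrable _ _),
      integral_add ((continuous_const.fun_mul hc1).intervalIntegrable _ _)
        (((continuous_const.fun_mul hc2).fun_add (continuous_const.fun_mul hc3)).intervalIntegrable _ _),
      integral_add ((continuous_const.fun_mul hc2).intervalIntegrable _ _)
        ((continuous_const.fun_mul hc3).intervalIntegrable _ _),
      intervalIntegral.integral_const_mul, intervalIntegral.integral_const_mul, intervalIntegral.integral_const_mul, intervalIntegral.integral_const_mul,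
      hJ0, hJ1, hJ2, hJ3]
    field_simp
    ring
  -- difference bound
  have hdiff : |(∫ θ in (0:ℝ)..(2*π),
        (2 * Real.log ‖1 - (u:ℂ)*Complex.exp (θ*Complex.I)‖)^2
          / ‖1 - (u:ℂ)*Complex.exp (θ*Complex.I)‖^2)
      - (∫ θ in (0:ℝ)..(2*π),
        (4*u^2*(Real.cos θ)^2 - 4*u^3*Real.cos θ + 8*u^3*(Real.cos θ)^3)
          / ‖1 - (u:ℂ)*Complex.exp (θ*Complex.I)‖^2)|
      ≤ 1000*u^4*(2*π/(1-u^2)) := by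
    rw [← integral_sub hgint hmint]
    have h2π : (0:ℝ) ≤ 2*π := by positivity
    calc |∫ θ in (0:ℝ)..(2*π), ((2 * Real.log ‖1 - (u:ℂ)*Complex.exp (θ*Complex.I)‖)^2
          / ‖1 - (u:ℂ)*Complex.exp (θ*Complex.I)‖^2
          - (4*u^2*(Real.cos θ)^2 - 4*u^3*Real.cos θ + 8*u^3*(Real.cos θ)^3)
          / ‖1 - (u:ℂ)*Complex.exp (θ*Complex.I)‖^2)|
        ≤ ∫ θ in (0:ℝ)..(2*π), |(2 * Real.log ‖1 - (u:ℂ)*Complex.exp (θ*Complex.I)‖)^2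
          / ‖1 - (u:ℂ)*Complex.exp (θ*Complex.I)‖^2
          - (4*u^2*(Real.cos θ)^2 - 4*u^3*Real.cos θ + 8*u^3*(Real.cos θ)^3)
          / ‖1 - (u:ℂ)*Complex.exp (θ*Complex.I)‖^2| :=
          intervalIntegral.abs_integral_le_integral_abs h2π
      _ ≤ ∫ θ in (0:ℝ)..(2*π), 1000*u^4*(1/‖1 - (u:ℂ)*Complex.exp (θ*Complex.I)‖^2) := by
          apply integral_mono_on h2π ((hgc.fun_sub hmc).abs.intervalIntegrable _ _)
            ((continuous_const.fun_mul (continuous_const.div₀ hdc hdne)).intervalIntegrable _ _)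
          intro θ _
          rw [div_sub_div_same, abs_div, _root_.abs_of_nonneg (le_of_lt (hdpos θ)),
            div_le_iff₀ (hdpos θ)]
          calc |(2 * Real.log ‖1 - (u:ℂ)*Complex.exp (θ*Complex.I)‖)^2
              - (4*u^2*(Real.cos θ)^2 - 4*u^3*Real.cos θ + 8*u^3*(Real.cos θ)^3)|
              ≤ 1000*u^4 := pointwise_est u θ hu0 hu
            _ = 1000*u^4*(1/‖1 - (u:ℂ)*Complex.exp (θ*Complex.I)‖^2)
                * ‖1 - (u:ℂ)*Complex.exp (θ*Complex.I)‖^2 := by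
                rw [mul_assoc, one_div, inv_mul_cancel₀ (hdne θ), mul_one]
      _ = 1000*u^4*(2*π/(1-u^2)) := by rw [intervalIntegral.integral_const_mul, hJ0]
  -- conclude
  have hkey : ((1 - u ^ 2) / (2 * π)) * (∫ θ in (0:ℝ)..(2 * π),
          (2 * Real.log ‖1 - (u : ℂ) * Complex.exp (θ * Complex.I)‖) ^ 2
            / ‖1 - (u : ℂ) * Complex.exp (θ * Complex.I)‖ ^ 2) - 2 * u ^ 2
      = ((1 - u ^ 2) / (2 * π)) * ((∫ θ in (0:ℝ)..(2 * π),
          (2 * Real.log ‖1 - (u : ℂ) * Complex.exp (θ * Complex.I)‖) ^ 2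
            / ‖1 - (u : ℂ) * Complex.exp (θ * Complex.I)‖ ^ 2)
        - (∫ θ in (0:ℝ)..(2*π),
          (4*u^2*(Real.cos θ)^2 - 4*u^3*Real.cos θ + 8*u^3*(Real.cos θ)^3)
            / ‖1 - (u:ℂ)*Complex.exp (θ*Complex.I)‖^2)) + (4*u^4 + 2*u^6) := by
    rw [hIm]
    have h1u : (1:ℝ) - u^2 ≠ 0 := by nlinarith
    rw [mul_sub, show (1 - u ^ 2) / (2 * π) * (2*π*(2*u^2 + 4*u^4 + 2*u^6)/(1-u^2))
        = 2*u^2 + 4*u^4 + 2*u^6 by field_simp]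
    ring
  rw [hkey]
  have h1u : (0:ℝ) < 1 - u^2 := by nlinarith
  have habs : |((1 - u ^ 2) / (2 * π))| = (1-u^2)/(2*π) := by
    rw [_root_.abs_of_nonneg]
    positivity
  calc _ ≤ |((1 - u ^ 2) / (2 * π)) * ((∫ θ in (0:ℝ)..(2 * π),
          (2 * Real.log ‖1 - (u : ℂ) * Complex.exp (θ * Complex.I)‖) ^ 2
            / ‖1 - (u : ℂ) * Complex.exp (θ * Complex.I)‖ ^ 2)
        - (∫ θ in (0:ℝ)..(2*π),
          (4*u^2*(Real.cos θ)^2 - 4*u^3*Real.cos θ + 8*u^3*(Real.cos θ)^3)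
            / ‖1 - (u:ℂ)*Complex.exp (θ*Complex.I)‖^2))| + |4*u^4 + 2*u^6| :=
        abs_add_le _ _
    _ ≤ (1-u^2)/(2*π) * (1000*u^4*(2*π/(1-u^2))) + (4*u^4 + 2*u^6) := by
        rw [abs_mul, habs, _root_.abs_of_nonneg (by positivity : (0:ℝ) ≤ 4*u^4 + 2*u^6)]
        have := mul_le_mul_of_nonneg_left hdiff (by positivity : (0:ℝ) ≤ (1-u^2)/(2*π))
        linarith
    _ = 1000*u^4 + (4*u^4 + 2*u^6) := by
        field_simp
    _ ≤ 1006*u^4 := by nlinarith [pow_nonneg hu0 4, mul_le_mul hu hu hu0 (by norm_num : (0:ℝ) ≤ 1/3)]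

lemma log_le_two_sqrt (x : ℝ) (hx : 0 < x) : Real.log x ≤ 2*Real.sqrt x := by
  have h : Real.log x = 2 * Real.log (Real.sqrt x) := by
    conv_lhs => rw [← Real.sq_sqrt hx.le]
    rw [Real.log_pow]
    push_cast; ring
  rw [h]
  have := Real.log_le_sub_one_of_pos (Real.sqrt_pos.mpr hx)
  linarith [Real.sqrt_nonneg x]

lemma crude_branch (u : ℝ) (hu0 : 0 ≤ u) (h13 : 1/3 ≤ u) (hu1 : u < 1) :
    |((1 - u ^ 2) / (2 * π)) * (∫ θ in (0:ℝ)..(2 * π),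
          (2 * Real.log ‖1 - (u : ℂ) * Complex.exp (θ * Complex.I)‖) ^ 2
            / ‖1 - (u : ℂ) * Complex.exp (θ * Complex.I)‖ ^ 2) - 2 * u ^ 2|
      ≤ 1000000 * u ^ 4 / (1 - u ^ 2) ^ 2 := by
  have hπ : (0:ℝ) < π := Real.pi_pos
  have h2π : (0:ℝ) ≤ 2*π := by positivity
  have h1u : (0:ℝ) < 1 - u := by linarith
  have h1u2 : (0:ℝ) < 1 - u^2 := by nlinarith
  have hwne : ∀ θ:ℝ, ‖1 - (u:ℂ)*Complex.exp (θ*Complex.I)‖ ≠ 0 := fun θ => (wpos u hu0 hu1 θ).ne'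
  have hdc : Continuous fun θ:ℝ => ‖1 - (u:ℂ)*Complex.exp (θ*Complex.I)‖^2 := ((wcont u).norm).pow 2
  have hdne : ∀ θ:ℝ, ‖1 - (u:ℂ)*Complex.exp (θ*Complex.I)‖^2 ≠ 0 :=
    fun θ => pow_ne_zero 2 (hwne θ)
  have hgc : Continuous fun θ:ℝ =>
      (2 * Real.log ‖1 - (u:ℂ)*Complex.exp (θ*Complex.I)‖)^2
        / ‖1 - (u:ℂ)*Complex.exp (θ*Complex.I)‖^2 :=
    ((continuous_const.mul (((wcont u).norm).log hwne)).pow 2).div hdc hdne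
  set L := Real.log (2/(1-u)) with hLdef
  have hLpos : 0 ≤ L := by
    rw [hLdef]
    apply Real.log_nonneg
    rw [le_div_iff₀ h1u]; linarith
  have hlogb : ∀ θ:ℝ, |Real.log ‖1 - (u:ℂ)*Complex.exp (θ*Complex.I)‖| ≤ L := by
    intro θ
    rw [abs_le]
    constructor
    · have h1 : Real.log (1-u) ≤ Real.log ‖1 - (u:ℂ)*Complex.exp (θ*Complex.I)‖ :=
        Real.log_le_log h1u (wlb u hu0 θ)
      have h2 : Real.log (1-u) = -Real.log (1/(1-u)) := by
        rw [one_div, Real.log_inv]; ring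
      have h3 : Real.log (1/(1-u)) ≤ L := by
        rw [hLdef]
        apply Real.log_le_log (by positivity)
        rw [div_le_div_iff₀ h1u h1u]; nlinarith
      linarith
    · have h1 : Real.log ‖1 - (u:ℂ)*Complex.exp (θ*Complex.I)‖ ≤ Real.log 2 := by
        apply Real.log_le_log (wpos u hu0 hu1 θ)
        linarith [wub u hu0 θ]
      have h2 : Real.log 2 ≤ L := by
        rw [hLdef]
        apply Real.log_le_log (by norm_num)
        rw [le_div_iff₀ h1u]; nlinarith
      linarith
  have hgle : ∀ θ:ℝ, (2 * Real.log ‖1 - (u:ℂ)*Complex.exp (θ*Complex.I)‖)^2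
      / ‖1 - (u:ℂ)*Complex.exp (θ*Complex.I)‖^2 ≤ 4*L^2/(1-u)^2 := by
    intro θ
    apply div_le_div₀ (by positivity)
    · have := hlogb θ
      have h1 : (Real.log ‖1 - (u:ℂ)*Complex.exp (θ*Complex.I)‖)^2 ≤ L^2 := by
        rw [← _root_.sq_abs]
        exact pow_le_pow_left₀ (abs_nonneg _) this 2
      nlinarith
    · positivity
    · exact pow_le_pow_left₀ h1u.le (wlb u hu0 θ) 2
  have hint0 : (0:ℝ) ≤ ∫ θ in (0:ℝ)..(2*π),
      (2 * Real.log ‖1 - (u:ℂ)*Complex.exp (θ*Complex.I)‖)^2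
        / ‖1 - (u:ℂ)*Complex.exp (θ*Complex.I)‖^2 := by
    apply integral_nonneg h2π
    intro θ _
    positivity
  have hintle : (∫ θ in (0:ℝ)..(2*π),
      (2 * Real.log ‖1 - (u:ℂ)*Complex.exp (θ*Complex.I)‖)^2
        / ‖1 - (u:ℂ)*Complex.exp (θ*Complex.I)‖^2) ≤ 2*π*(4*L^2/(1-u)^2) := by
    calc _ ≤ ∫ _ in (0:ℝ)..(2*π), 4*L^2/(1-u)^2 :=
          integral_mono_on h2π (hgc.intervalIntegrable (μ := volume) _ _)
            (intervalIntegrable_const) (fun θ _ => hgle θ)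
    _ = 2*π*(4*L^2/(1-u)^2) := by rw [intervalIntegral.integral_const, smul_eq_mul]; ring
  have hL2 : L^2 ≤ 8/(1-u) := by
    have h1 : L ≤ 2*Real.sqrt (2/(1-u)) := log_le_two_sqrt _ (by positivity)
    have h2 : L^2 ≤ (2*Real.sqrt (2/(1-u)))^2 := pow_le_pow_left₀ hLpos h1 2
    have h3 : (Real.sqrt (2/(1-u)))^2 = 2/(1-u) := Real.sq_sqrt (by positivity : (0:ℝ) ≤ 2/(1-u))
    calc L^2 ≤ (2*Real.sqrt (2/(1-u)))^2 := h2
    _ = 4*(2/(1-u)) := by rw [mul_pow]; rw [h3]; norm_num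
    _ = 8/(1-u) := by ring
  -- A ∈ [0, 64/(1-u)²]
  have hAub : ((1 - u ^ 2) / (2 * π)) * (∫ θ in (0:ℝ)..(2 * π),
          (2 * Real.log ‖1 - (u : ℂ) * Complex.exp (θ * Complex.I)‖) ^ 2
            / ‖1 - (u : ℂ) * Complex.exp (θ * Complex.I)‖ ^ 2) ≤ 64/(1-u)^2 := by
    calc ((1 - u ^ 2) / (2 * π)) * (∫ θ in (0:ℝ)..(2 * π),
          (2 * Real.log ‖1 - (u : ℂ) * Complex.exp (θ * Complex.I)‖) ^ 2
            / ‖1 - (u : ℂ) * Complex.exp (θ * Complex.I)‖ ^ 2)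
        ≤ ((1 - u ^ 2) / (2 * π)) * (2*π*(4*L^2/(1-u)^2)) :=
          mul_le_mul_of_nonneg_left hintle (by positivity)
    _ = (1-u^2)*(4*L^2/(1-u)^2) := by field_simp
    _ ≤ (2*(1-u))*(4*(8/(1-u))/(1-u)^2) := by
        apply mul_le_mul (show (1:ℝ)-u^2 ≤ 2*(1-u) by nlinarith)
        · apply div_le_div₀ (by positivity) (by nlinarith) (by positivity) le_rfl
        · positivity
        · nlinarith
    _ = 64/(1-u)^2 := by field_simp; ring
  have hA0 : 0 ≤ ((1 - u ^ 2) / (2 * π)) * (∫ θ in (0:ℝ)..(2 * π),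
          (2 * Real.log ‖1 - (u : ℂ) * Complex.exp (θ * Complex.I)‖) ^ 2
            / ‖1 - (u : ℂ) * Complex.exp (θ * Complex.I)‖ ^ 2) := by
    apply mul_nonneg (by positivity) hint0
  have hbig : 66/(1-u)^2 ≤ 1000000 * u ^ 4 / (1 - u ^ 2) ^ 2 := by
    rw [div_le_div_iff₀ (by positivity) (by positivity)]
    have : (1-u^2)^2 = (1-u)^2*(1+u)^2 := by ring
    rw [this]
    have h2 : u^2 ≥ 1/9 := by nlinarith
    have h4 : u^4 ≥ 1/81 := by nlinarith [sq_nonneg (u^2 - 1/9)]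
    nlinarith [sq_nonneg (1-u), sq_nonneg (1+u), mul_pos (mul_pos h1u h1u) (by nlinarith : (0:ℝ) < (1+u)^2)]
  rw [abs_le]
  constructor
  · have : 2*u^2 ≤ 66/(1-u)^2 := by
      have h1 : (1:ℝ) ≤ 1/(1-u)^2 := by
        rw [le_div_iff₀ (by positivity)]; nlinarith
      have h2 : 66/(1-u)^2 = 66*(1/(1-u)^2) := by ring
      nlinarith [sq_nonneg u]
    linarith
  · have : ((1 - u ^ 2) / (2 * π)) * (∫ θ in (0:ℝ)..(2 * π),
          (2 * Real.log ‖1 - (u : ℂ) * Complex.exp (θ * Complex.I)‖) ^ 2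
            / ‖1 - (u : ℂ) * Complex.exp (θ * Complex.I)‖ ^ 2) - 2*u^2 ≤ 66/(1-u)^2 := by
      have h1 : (0:ℝ) ≤ 2/(1-u)^2 := by positivity
      have h2 : 66/(1-u)^2 = 64/(1-u)^2 + 2/(1-u)^2 := by ring
      nlinarith [sq_nonneg u]
    linarith

/-- there is an absolute constant `C > 0` such that for all `u ∈ [0,1)`,
`|(1−u²)/(2π) ∫₀^{2π} (2 log|1−u e^{iθ}|)²/|1−u e^{iθ}|² dθ − 2u²| ≤ C u⁴/(1−u²)²`. -/
theorem circle_log_square_moment :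
    ∃ C : ℝ, 0 < C ∧ ∀ u : ℝ, 0 ≤ u → u < 1 →
      |((1 - u ^ 2) / (2 * π)) * (∫ θ in (0:ℝ)..(2 * π),
            (2 * Real.log ‖1 - (u : ℂ) * Complex.exp (θ * Complex.I)‖) ^ 2
              / ‖1 - (u : ℂ) * Complex.exp (θ * Complex.I)‖ ^ 2)
          - 2 * u ^ 2|
        ≤ C * u ^ 4 / (1 - u ^ 2) ^ 2 := by
  refine ⟨1000000, by norm_num, fun u hu0 hu1 => ?_⟩
  rcases le_or_gt u (1/3) with h | h
  · calc _ ≤ 1006 * u ^ 4 := fine_branch u hu0 h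
    _ ≤ 1000000 * u ^ 4 / (1 - u ^ 2) ^ 2 := by
        have h1 : (0:ℝ) < 1 - u^2 := by nlinarith
        rw [le_div_iff₀ (by positivity)]
        have h2 : (1-u^2)^2 ≤ 1 := by nlinarith
        nlinarith [pow_nonneg hu0 4]
  · exact crude_branch u hu0 h.le hu1
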